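/- Let J₁, J₂, I be lattice line segments in ℤ^3 (segments with endpoints in the lattice) whose direction vectors are linearly independent. Then the Minkowski sum P = J₁ + J₂ + I (a lattice parallelotope) is a normal lattice polytope. -/

import Mathlib

open Set Pointwise

/-- `x` is a lattice point (all coordinates are integers). -/
def IsLat {n : ℕ} (x : Fin n → ℝ) : Prop := ∀ i, ∃ m : ℤ, x i = (m : ℝ)

/-- The set of lattice points of `P`. -/
def latPts {n : ℕ} (P : Set (Fin n → ℝ)) : Set (Fin n → ℝ) := {x ∈ P | IsLat x}

/-- `P` is a lattice polytope: the convex hull of finitely many lattice points. -/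
def IsLatticePolytope {n : ℕ} (P : Set (Fin n → ℝ)) : Prop :=
  ∃ S : Finset (Fin n → ℝ), (∀ x ∈ S, IsLat x) ∧ P = convexHull ℝ (S : Set (Fin n → ℝ))

/-- The dimension of a polytope: the dimension of its affine hull. -/
noncomputable def polyDim {n : ℕ} (P : Set (Fin n → ℝ)) : ℕ :=
  Module.finrank ℝ (affineSpan ℝ P).direction

/-- `P` is normal: for every `k ≥ 1`, every lattice point of the dilate `k • P`
is a sum of `k` lattice points of `P`. -/
def IsNormal {n : ℕ} (P : Set (Fin n → ℝ)) : Prop :=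
  ∀ k : ℕ, 1 ≤ k → ∀ v ∈ latPts ((k : ℝ) • P),
    ∃ u : Fin k → (Fin n → ℝ), (∀ i, u i ∈ latPts P) ∧ v = ∑ i, u i

lemma isLat_add {n : ℕ} {x y : Fin n → ℝ} (hx : IsLat x) (hy : IsLat y) :
    IsLat (x + y) := by
  intro i
  obtain ⟨m, hm⟩ := hx i
  obtain ⟨m', hm'⟩ := hy i
  exact ⟨m + m', by simp [hm, hm']⟩

lemma isLat_sub {n : ℕ} {x y : Fin n → ℝ} (hx : IsLat x) (hy : IsLat y) :
    IsLat (x - y) := by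
  intro i
  obtain ⟨m, hm⟩ := hx i
  obtain ⟨m', hm'⟩ := hy i
  exact ⟨m - m', by simp [hm, hm']⟩

lemma isLat_zero {n : ℕ} : IsLat (0 : Fin n → ℝ) := fun i => ⟨0, by simp⟩

lemma isLat_sum {n : ℕ} {ι : Type*} (s : Finset ι) (f : ι → Fin n → ℝ)
    (h : ∀ j ∈ s, IsLat (f j)) : IsLat (∑ j ∈ s, f j) :=
  Finset.sum_induction f IsLat (fun _ _ ha hb => isLat_add ha hb) isLat_zero h

/-- Splitting a total mass `k*t` (with `t ∈ [0,1]`) into `k` pieces in `[0,1]`,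
all of them `0` or `1` except possibly the last one. -/
lemma coeff_decomp (k : ℕ) (hk : 1 ≤ k) (t : ℝ) (ht0 : 0 ≤ t) (ht1 : t ≤ 1) :
    ∃ w : Fin k → ℝ, (∀ j, 0 ≤ w j ∧ w j ≤ 1) ∧
      (∀ j : Fin k, (j : ℕ) + 1 < k → w j = 0 ∨ w j = 1) ∧
      (∑ j, w j) = (k : ℝ) * t := by
  set s : ℝ := (k : ℝ) * t with hs
  have hs0 : 0 ≤ s := by positivity
  have hsk : s ≤ (k : ℝ) := by
    calc s ≤ (k : ℝ) * 1 := by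
            apply mul_le_mul_of_nonneg_left ht1 (by positivity)
    _ = (k : ℝ) := by ring
  have hfl0 : (0 : ℤ) ≤ ⌊s⌋ := Int.floor_nonneg.mpr hs0
  set c : ℕ := min (⌊s⌋.toNat) (k - 1) with hc
  have hck : c ≤ k - 1 := min_le_right _ _
  have hcfl : (c : ℤ) ≤ ⌊s⌋ := by
    have : c ≤ ⌊s⌋.toNat := min_le_left _ _
    omega
  have hcs : (c : ℝ) ≤ s := by
    calc (c : ℝ) ≤ (⌊s⌋ : ℝ) := by exact_mod_cast hcfl
    _ ≤ s := Int.floor_le s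
  have hs1 : s - c ≤ 1 := by
    rcases le_or_gt (⌊s⌋.toNat) (k - 1) with h | h
    · have hcast : (⌊s⌋.toNat : ℤ) = ⌊s⌋ := by omega
      have hcc : (c : ℝ) = ((⌊s⌋ : ℤ) : ℝ) := by
        rw [hc, min_eq_left h]
        exact_mod_cast congrArg (Int.cast : ℤ → ℝ) hcast
      have hlt : s < (c : ℝ) + 1 := by
        rw [hcc]
        exact Int.lt_floor_add_one s
      linarith
    · have hcc : c = k - 1 := min_eq_right (le_of_lt h)
      have : (c : ℝ) = (k : ℝ) - 1 := by
        rw [hcc]; push_cast [hk]; ring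
      linarith
  refine ⟨fun j => if (j : ℕ) < c then 1 else if (j : ℕ) = k - 1 then s - c else 0,
    ?_, ?_, ?_⟩
  · intro j
    dsimp only
    split_ifs with h1 h2
    · norm_num
    · constructor <;> linarith
    · norm_num
  · intro j hj
    dsimp only
    split_ifs with h1 h2
    · right; rfl
    · omega
    · left; rfl
  · rw [Fin.sum_univ_eq_sum_range (fun j => if j < c then (1:ℝ) else if j = k - 1 then s - c else 0)]
    have hsplit : ∀ j ∈ Finset.range k,
        (if j < c then (1:ℝ) else if j = k - 1 then s - c else 0)
          = (if j < c then (1:ℝ) else 0) + (if j = k - 1 then s - (c:ℝ) else 0) := by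
      intro j hj
      split_ifs with h1 h2
      · omega
      · ring
      · ring
      · ring
    rw [Finset.sum_congr rfl hsplit, Finset.sum_add_distrib]
    have h1 : (∑ j ∈ Finset.range k, if j < c then (1:ℝ) else 0) = c := by
      rw [Finset.sum_ite, Finset.sum_const, Finset.sum_const]
      have : (Finset.range k).filter (fun j => j < c) = Finset.range c := by
        ext j
        simp only [Finset.mem_filter, Finset.mem_range]
        omega
      simp [this]
    have h2 : (∑ j ∈ Finset.range k, if j = k - 1 then s - (c:ℝ) else 0) = s - c := by
      rw [Finset.sum_ite_eq' (Finset.range k) (k-1) (fun _ => s - (c:ℝ))]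
      simp [Nat.sub_lt hk]
    rw [h1, h2]
    ring

/-- A lattice parallelotope, the Minkowski sum of three lattice segments with linearly
independent directions, is normal. -/
theorem stmt4 (a₁ b₁ a₂ b₂ a₃ b₃ : Fin 3 → ℝ)
    (h₁ : IsLat a₁) (h₂ : IsLat b₁) (h₃ : IsLat a₂) (h₄ : IsLat b₂)
    (h₅ : IsLat a₃) (h₆ : IsLat b₃)
    (hind : LinearIndependent ℝ ![b₁ - a₁, b₂ - a₂, b₃ - a₃]) :
    IsNormal (segment ℝ a₁ b₁ + segment ℝ a₂ b₂ + segment ℝ a₃ b₃) := by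
  classical
  intro k hk v hv
  obtain ⟨hvP, hvLat⟩ := hv
  obtain ⟨p, hp, hpv⟩ := Set.mem_smul_set.mp hvP
  rw [Set.mem_add] at hp
  obtain ⟨q, hq, r₃, hr₃, hqr⟩ := hp
  rw [Set.mem_add] at hq
  obtain ⟨r₁, hr₁, r₂, hr₂, hrr⟩ := hq
  rw [segment_eq_image'] at hr₁ hr₂ hr₃
  obtain ⟨t₁, ht₁, hre₁⟩ := hr₁
  obtain ⟨t₂, ht₂, hre₂⟩ := hr₂
  obtain ⟨t₃, ht₃, hre₃⟩ := hr₃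
  simp only [Set.mem_Icc] at ht₁ ht₂ ht₃
  obtain ⟨w₁, hw₁b, hw₁i, hw₁s⟩ := coeff_decomp k hk t₁ ht₁.1 ht₁.2
  obtain ⟨w₂, hw₂b, hw₂i, hw₂s⟩ := coeff_decomp k hk t₂ ht₂.1 ht₂.2
  obtain ⟨w₃, hw₃b, hw₃i, hw₃s⟩ := coeff_decomp k hk t₃ ht₃.1 ht₃.2
  set u : Fin k → (Fin 3 → ℝ) := fun j =>
    (a₁ + w₁ j • (b₁ - a₁)) + (a₂ + w₂ j • (b₂ - a₂)) + (a₃ + w₃ j • (b₃ - a₃)) with hu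
  have humem : ∀ j, u j ∈ segment ℝ a₁ b₁ + segment ℝ a₂ b₂ + segment ℝ a₃ b₃ := by
    intro j
    apply Set.add_mem_add
    apply Set.add_mem_add
    · rw [segment_eq_image']
      exact ⟨w₁ j, Set.mem_Icc.mpr (hw₁b j), rfl⟩
    · rw [segment_eq_image']
      exact ⟨w₂ j, Set.mem_Icc.mpr (hw₂b j), rfl⟩
    · rw [segment_eq_image']
      exact ⟨w₃ j, Set.mem_Icc.mpr (hw₃b j), rfl⟩
  have hS : ∑ j, u j = v := by
    rw [← hpv, ← hqr, ← hrr, ← hre₁, ← hre₂, ← hre₃]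
    simp only [hu, Finset.sum_add_distrib, ← Finset.sum_smul, hw₁s, hw₂s, hw₃s,
      Finset.sum_const, Finset.card_univ, Fintype.card_fin]
    module
  -- lattice points for non-last indices
  have hulat : ∀ j : Fin k, (j : ℕ) + 1 < k → IsLat (u j) := by
    intro j hj
    have l1 : IsLat (a₁ + w₁ j • (b₁ - a₁)) := by
      rcases hw₁i j hj with h | h
      · simpa [h] using h₁
      · simpa [h] using h₂
    have l2 : IsLat (a₂ + w₂ j • (b₂ - a₂)) := by
      rcases hw₂i j hj with h | h
      · simpa [h] using h₃
      · simpa [h] using h₄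
    have l3 : IsLat (a₃ + w₃ j • (b₃ - a₃)) := by
      rcases hw₃i j hj with h | h
      · simpa [h] using h₅
      · simpa [h] using h₆
    exact isLat_add (isLat_add l1 l2) l3
  -- the last index
  set L : Fin k := ⟨k - 1, by omega⟩ with hL
  have hLlat : IsLat (u L) := by
    have hUL : u L = v - ∑ j ∈ Finset.univ.erase L, u j := by
      have := Finset.add_sum_erase Finset.univ u (Finset.mem_univ L)
      rw [hS] at this
      rw [← this]
      abel
    rw [hUL]
    apply isLat_sub hvLat
    apply isLat_sum
    intro j hjmem
    have hjne : j ≠ L := (Finset.mem_erase.mp hjmem).1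
    apply hulat
    have : (j : ℕ) < k := j.isLt
    have : (j : ℕ) ≠ k - 1 := by
      intro h
      exact hjne (Fin.ext h)
    omega
  refine ⟨u, fun j => ⟨humem j, ?_⟩, hS.symm⟩
  rcases lt_or_ge ((j : ℕ) + 1) k with h | h
  · exact hulat j h
  · have : j = L := by
      apply Fin.ext
      have := j.isLt
      simp only [hL]
      omega
    rw [this]
    exact hLlat
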